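/- arXiv:2004.02570 — 2 statements merged into one kernel-verified Lean document; each statement's English description precedes it below -/
import Mathlib

section
/- (Lemma 4) Let o_0, …, o_n be a trip schedule whose points each lie in some subgraph of the partition, let l^s lie in some subgraph, and let 0 ≤ i < n. If dis↓(o_i, l^s) + dis↓(l^s, o_{i+1}) − dist(o_i, o_{i+1}) > sd[i+1], then the actual incremental distance Δd(o_i, l^s, o_{i+1}) = dist(o_i, l^s) + dist(l^s, o_{i+1}) − dist(o_i, o_{i+1}) also exceeds sd[i+1]; consequently there exists a position x with i+1 ≤ x ≤ n whose surplus is exceeded, i.e., sur(x) < Δd(o_i, l^s, o_{i+1}). Hence the rider cannot be picked up at the i-th point. -/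
open scoped Classical

/-- Lower bound distance `dis(G_i, G_j)` between two subgraphs: the minimum
shortest-path distance over all bridge-vertex pairs (0 if `i = j`). -/
noncomputable def disG {X ι : Type*} [MetricSpace X] (B : ι → Finset X) (i j : ι) : ℝ :=
  if i = j then 0 else sInf {d : ℝ | ∃ b ∈ B i, ∃ b' ∈ B j, d = dist b b'}

/-- Lower bound distance `dis↓(u)` from a vertex `u` of subgraph `i` to its
nearest bridge vertex of that subgraph. -/
noncomputable def disDown {X ι : Type*} [MetricSpace X] (B : ι → Finset X) (i : ι) (u : X) : ℝ :=
  sInf {d : ℝ | ∃ b ∈ B i, d = dist u b}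

/-- Lower bound distance `dis↓(u, G_j)` between a vertex `u ∈ V i` and the subgraph `G_j`. -/
noncomputable def disVG {X ι : Type*} [MetricSpace X] (B : ι → Finset X) (i j : ι) (u : X) : ℝ :=
  if i = j then 0
  else disG B i j + (if u ∈ B i then 0 else disDown B i u)

/-- Lower bound distance `dis↓(u, v)` between vertices `u ∈ V i` and `v ∈ V j`. -/
noncomputable def disVV {X ι : Type*} [MetricSpace X] (B : ι → Finset X) (i j : ι) (u v : X) : ℝ :=
  if i = j then 0
  else disG B i j + (if u ∈ B i then 0 else disDown B i u)
    + (if v ∈ B j then 0 else disDown B j v)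

/-- Slack distance `sd[k] = min_{k ≤ x ≤ n} sur(x)` of a trip schedule with
surplus values `sur`. -/
noncomputable def slack (sur : ℕ → ℝ) (n k : ℕ) : ℝ := sInf (sur '' Set.Icc k n)


lemma disVV_le_dist {X ι : Type*} [MetricSpace X]
    (V : ι → Set X) (B : ι → Finset X)
    (hpass : ∀ i j : ι, i ≠ j → ∀ u ∈ V i, ∀ v ∈ V j,
      ∃ b ∈ B i, ∃ b' ∈ B j, dist u v = dist u b + dist b b' + dist b' v)
    {i j : ι} {u v : X} (hu : u ∈ V i) (hv : v ∈ V j) :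
    disVV B i j u v ≤ dist u v := by
  unfold disVV
  by_cases hij : i = j
  · simp [hij, dist_nonneg]
  · simp only [if_neg hij]
    obtain ⟨b, hb, b', hb', heq⟩ := hpass i j hij u hu v hv
    have h1 : disG B i j ≤ dist b b' := by
      unfold disG
      rw [if_neg hij]
      refine csInf_le ⟨0, ?_⟩ ⟨b, hb, b', hb', rfl⟩
      rintro d ⟨x, _, y, _, rfl⟩; exact dist_nonneg
    have h2 : (if u ∈ B i then 0 else disDown B i u) ≤ dist u b := by
      split
      · exact dist_nonneg
      · refine csInf_le ⟨0, ?_⟩ ⟨b, hb, rfl⟩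
        rintro d ⟨x, _, rfl⟩; exact dist_nonneg
    have h3 : (if v ∈ B j then 0 else disDown B j v) ≤ dist b' v := by
      split
      · exact dist_nonneg
      · refine csInf_le ⟨0, ?_⟩ ⟨b', hb', by rw [dist_comm]⟩
        rintro d ⟨x, _, rfl⟩; exact dist_nonneg
    linarith

/-- Lemma 4: if the lower-bound incremental distance of
inserting `l^s` between `o_i` and `o_{i+1}` exceeds the slack `sd[i+1]`, then
the actual incremental distance `Δd(o_i, l^s, o_{i+1})` also exceeds
`sd[i+1]`, and some position `x` with `i+1 ≤ x ≤ n` has its surplus exceeded;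
hence the rider cannot be picked up at the `i`-th point. -/
theorem prune_source_insertion {X ι : Type*} [MetricSpace X] [Nontrivial ι]
    (V : ι → Set X) (B : ι → Finset X)
    (hcover : ∀ x : X, ∃ i, x ∈ V i)
    (hdisj : ∀ i j : ι, i ≠ j → Disjoint (V i) (V j))
    (hBne : ∀ i, (B i).Nonempty)
    (hBV : ∀ i, (B i : Set X) ⊆ V i)
    (hpass : ∀ i j : ι, i ≠ j → ∀ u ∈ V i, ∀ v ∈ V j,
      ∃ b ∈ B i, ∃ b' ∈ B j, dist u v = dist u b + dist b b' + dist b' v)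
    (o : ℕ → X) (n : ℕ) (idx : ℕ → ι) (ho : ∀ k, k ≤ n → o k ∈ V (idx k))
    (sur : ℕ → ℝ)
    {is : ι} {ls : X} (hls : ls ∈ V is)
    {i : ℕ} (hi : i < n)
    (h : disVV B (idx i) is (o i) ls + disVV B is (idx (i + 1)) ls (o (i + 1))
        - dist (o i) (o (i + 1)) > slack sur n (i + 1)) :
    dist (o i) ls + dist ls (o (i + 1)) - dist (o i) (o (i + 1))
        > slack sur n (i + 1) ∧
      ∃ x, i + 1 ≤ x ∧ x ≤ n ∧
        sur x < dist (o i) ls + dist ls (o (i + 1)) - dist (o i) (o (i + 1)) := by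
  have hle1 : disVV B (idx i) is (o i) ls ≤ dist (o i) ls :=
    disVV_le_dist V B hpass (ho i hi.le) hls
  have hle2 : disVV B is (idx (i+1)) ls (o (i+1)) ≤ dist ls (o (i+1)) :=
    disVV_le_dist V B hpass hls (ho (i+1) hi)
  have hmain : dist (o i) ls + dist ls (o (i + 1)) - dist (o i) (o (i + 1))
      > slack sur n (i + 1) := by linarith
  refine ⟨hmain, ?_⟩
  have hne : (sur '' Set.Icc (i+1) n).Nonempty :=
    ⟨sur (i+1), ⟨i+1, ⟨le_refl _, hi⟩, rfl⟩⟩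
  have hfin : (sur '' Set.Icc (i+1) n).Finite := (Set.finite_Icc _ _).image _
  have hmem : slack sur n (i+1) ∈ sur '' Set.Icc (i+1) n := hne.csInf_mem hfin
  obtain ⟨x, ⟨hx1, hx2⟩, hx3⟩ := hmem
  exact ⟨x, hx1, hx2, by rw [hx3]; exact hmain⟩
end

section
/- (Lemma 6) Let o_0, …, o_n be a trip schedule whose points each lie in some subgraph of the partition, let the rider's source l^s and destination l^d lie in some subgraphs, and let 0 ≤ i < j < n. Suppose l^s is inserted between o_i and o_{i+1} and l^d is to be inserted between o_j and o_{j+1}. If Δd(o_i, l^s, o_{i+1}) + dis↓(o_j, l^d) + dis↓(l^d, o_{j+1}) − dist(o_j, o_{j+1}) > sd[j+1], then the total actual incremental distance Δd(o_i, l^s, o_{i+1}) + Δd(o_j, l^d, o_{j+1}) also exceeds sd[j+1]; consequently some position x with j+1 ≤ x ≤ n has its surplus sur(x) exceeded, so l^d cannot be inserted at the j-th point. -/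
open scoped Classical

/-- The incremental distance `Δd(a,b,c)` of inserting `b` between `a` and `c`. -/
noncomputable def incDist {X : Type*} [MetricSpace X] (a b c : X) : ℝ :=
  dist a b + dist b c - dist a c

/-- Lemma 6: with `l^s` inserted between `o_i` and `o_{i+1}`
and `l^d` to be inserted between `o_j` and `o_{j+1}` (`i < j < n`), if
`Δd(o_i,l^s,o_{i+1})` plus the lower-bound incremental drop-off distance
exceeds the slack `sd[j+1]`, then the total actual incremental distance
`Δd(o_i,l^s,o_{i+1}) + Δd(o_j,l^d,o_{j+1})` also exceeds `sd[j+1]`, and some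
position `x` with `j+1 ≤ x ≤ n` has its surplus exceeded; hence `l^d` cannot
be inserted at the `j`-th point. -/
theorem prune_destination_insertion {X ι : Type*} [MetricSpace X] [Nontrivial ι]
    (V : ι → Set X) (B : ι → Finset X)
    (hcover : ∀ x : X, ∃ i, x ∈ V i)
    (hdisj : ∀ i j : ι, i ≠ j → Disjoint (V i) (V j))
    (hBne : ∀ i, (B i).Nonempty)
    (hBV : ∀ i, (B i : Set X) ⊆ V i)
    (hpass : ∀ i j : ι, i ≠ j → ∀ u ∈ V i, ∀ v ∈ V j,
      ∃ b ∈ B i, ∃ b' ∈ B j, dist u v = dist u b + dist b b' + dist b' v)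
    (o : ℕ → X) (n : ℕ) (idx : ℕ → ι) (ho : ∀ k, k ≤ n → o k ∈ V (idx k))
    (sur : ℕ → ℝ)
    {is id' : ι} {ls ld : X} (hls : ls ∈ V is) (hld : ld ∈ V id')
    {i j : ℕ} (hij : i < j) (hj : j < n)
    (h : incDist (o i) ls (o (i + 1))
          + disVV B (idx j) id' (o j) ld + disVV B id' (idx (j + 1)) ld (o (j + 1))
          - dist (o j) (o (j + 1)) > slack sur n (j + 1)) :
    incDist (o i) ls (o (i + 1)) + incDist (o j) ld (o (j + 1))
        > slack sur n (j + 1) ∧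
      ∃ x, j + 1 ≤ x ∧ x ≤ n ∧
        sur x < incDist (o i) ls (o (i + 1)) + incDist (o j) ld (o (j + 1)) := by
  have h1 : disVV B (idx j) id' (o j) ld ≤ dist (o j) ld :=
    disVV_le_dist V B hpass (ho j hj.le) hld
  have h2 : disVV B id' (idx (j + 1)) ld (o (j + 1)) ≤ dist ld (o (j + 1)) :=
    disVV_le_dist V B hpass hld (ho (j + 1) hj)
  have hmain : incDist (o i) ls (o (i + 1)) + incDist (o j) ld (o (j + 1))
      > slack sur n (j + 1) := by
    unfold incDist at *; linarith
  refine ⟨hmain, ?_⟩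
  have hne : (sur '' Set.Icc (j + 1) n).Nonempty :=
    ⟨sur (j + 1), ⟨j + 1, ⟨le_refl _, hj⟩, rfl⟩⟩
  have hfin : (sur '' Set.Icc (j + 1) n).Finite :=
    (Set.finite_Icc _ _).image _
  obtain ⟨x, hx, hxs⟩ := hne.csInf_mem hfin
  exact ⟨x, hx.1, hx.2, by rw [slack] at hmain; rw [hxs]; exact hmain⟩
end
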